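/- Lower L² bound for the perturbed identity operator: for every x > 0, every w ∈ ℂ with Re w > 0, and every h ∈ L²([0,x];ℂ), one has ‖h‖_{L²([0,x])} ≤ ‖ y ↦ h(y) + ∫₀^x h(s)·Φ(s,y,w) ds ‖_{L²([0,x])}. -/

import Mathlib

open MeasureTheory Set

noncomputable section

/-- The kernel `Φ(x,y,w) = ∫₀^∞ (sin kx / k)(sin ky / k)(√(k²+w) − k)(2k/π) dk`
(principal branch of the complex square root). -/
def Phi (x y : ℝ) (w : ℂ) : ℂ :=
  ∫ k in Ioi (0:ℝ),
    ((Real.sin (k * x) / k : ℝ) : ℂ) * ((Real.sin (k * y) / k : ℝ) : ℂ) *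
      (((k : ℂ) ^ 2 + w) ^ ((1 : ℂ) / 2) - (k : ℂ)) * ((2 * k / Real.pi : ℝ) : ℂ)

namespace Stmt15Aux

/-- The multiplier `√(k²+w)`. -/
def sq2 (w : ℂ) (k : ℝ) : ℂ := ((k : ℂ) ^ 2 + w) ^ ((1 : ℂ) / 2)

/-- Integrand of `Phi`. -/
def phi (w : ℂ) (k s y : ℝ) : ℂ :=
  ((Real.sin (k * s) / k : ℝ) : ℂ) * ((Real.sin (k * y) / k : ℝ) : ℂ) *
      (sq2 w k - (k : ℂ)) * ((2 * k / Real.pi : ℝ) : ℂ)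

lemma Phi_eq (s y : ℝ) (w : ℂ) : Phi s y w = ∫ k in Ioi (0:ℝ), phi w k s y := rfl

lemma z_ne {w : ℂ} (hw : 0 < w.re) (k : ℝ) : ((k : ℂ) ^ 2 + w) ≠ 0 := by
  intro hzero
  have : ((k : ℂ) ^ 2 + w).re = 0 := by rw [hzero]; simp
  simp only [Complex.add_re, Complex.ofReal_pow] at this
  have hk2 : (0:ℝ) ≤ ((k:ℂ)^2).re := by
    norm_cast
    positivity
  nlinarith [hk2, hw, this, Complex.add_re ((k:ℂ)^2) w]

lemma sq2_mul_self {w : ℂ} (hw : 0 < w.re) (k : ℝ) :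
    sq2 w k * sq2 w k = (k : ℂ) ^ 2 + w := by
  unfold sq2
  rw [← Complex.cpow_add _ _ (z_ne hw k)]
  norm_num

lemma sq2_re_nonneg {w : ℂ} (hw : 0 < w.re) (k : ℝ) : 0 ≤ (sq2 w k).re := by
  unfold sq2
  rw [Complex.cpow_def_of_ne_zero (z_ne hw k)]
  rw [Complex.exp_re]
  apply mul_nonneg (Real.exp_nonneg _)
  apply Real.cos_nonneg_of_mem_Icc
  have him : (Complex.log ((k:ℂ)^2 + w) * ((1:ℂ)/2)).im = ((k:ℂ)^2 + w).arg / 2 := by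
    simp [Complex.mul_im, Complex.log_im, Complex.log_re]
    ring
  rw [him]
  constructor
  · have := Complex.neg_pi_lt_arg ((k:ℂ)^2 + w)
    linarith
  · have := Complex.arg_le_pi ((k:ℂ)^2 + w)
    linarith

lemma sq2_re_ge {w : ℂ} (hw : 0 < w.re) {k : ℝ} (hk : 0 ≤ k) : k ≤ (sq2 w k).re := by
  have hmul := sq2_mul_self hw k
  have hre : (sq2 w k).re * (sq2 w k).re - (sq2 w k).im * (sq2 w k).im = k^2 + w.re := by
    have := congrArg Complex.re hmul
    have h2 : ((k:ℂ)^2).re = k^2 := by norm_cast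
    simp only [Complex.mul_re, Complex.add_re] at this
    rw [h2] at this
    exact this
  have h0 := sq2_re_nonneg hw k
  nlinarith [sq_nonneg ((sq2 w k).im), hw]

lemma m_re_nonneg {w : ℂ} (hw : 0 < w.re) {k : ℝ} (hk : 0 ≤ k) :
    0 ≤ (sq2 w k - (k:ℂ)).re := by
  have := sq2_re_ge hw hk
  simp only [Complex.sub_re, Complex.ofReal_re]
  linarith

lemma m_norm_le {w : ℂ} (hw : 0 < w.re) {k : ℝ} (hk : 0 < k) :
    ‖sq2 w k - (k:ℂ)‖ ≤ ‖w‖ / k := by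
  have key : (sq2 w k - (k:ℂ)) * (sq2 w k + (k:ℂ)) = w := by
    have := sq2_mul_self hw k
    ring_nf
    ring_nf at this
    linear_combination this
  have h1 : ‖sq2 w k - (k:ℂ)‖ * ‖sq2 w k + (k:ℂ)‖ = ‖w‖ := by
    rw [← norm_mul, key]
  have h2 : k ≤ ‖sq2 w k + (k:ℂ)‖ := by
    have hre : k ≤ (sq2 w k + (k:ℂ)).re := by
      have := sq2_re_ge hw hk.le
      simp only [Complex.add_re, Complex.ofReal_re]
      linarith
    calc k ≤ (sq2 w k + (k:ℂ)).re := hre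
      _ ≤ ‖sq2 w k + (k:ℂ)‖ := Complex.re_le_norm _
      _ = ‖sq2 w k + (k:ℂ)‖ := rfl
  rw [le_div_iff₀ hk]
  calc ‖sq2 w k - (k:ℂ)‖ * k ≤ ‖sq2 w k - (k:ℂ)‖ * ‖sq2 w k + (k:ℂ)‖ :=
        mul_le_mul_of_nonneg_left h2 (norm_nonneg _)
    _ = ‖w‖ := h1

/-- Dominating function for `phi` on `[0,x]²`. -/
def Bnd (w : ℂ) (x k : ℝ) : ℝ := 2 * ‖w‖ / Real.pi * ((min 1 (k * x)) ^ 2 / k ^ 2)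

lemma Bnd_nonneg (w : ℂ) (x k : ℝ) : 0 ≤ Bnd w x k := by
  unfold Bnd
  have := Real.pi_pos
  positivity

lemma sin_bound {k x s : ℝ} (hk : 0 < k) (hs : s ∈ Icc 0 x) :
    |Real.sin (k * s)| ≤ min 1 (k * x) := by
  rcases hs with ⟨hs0, hsx⟩
  apply le_min
  · exact Real.abs_sin_le_one _ |>.trans_eq rfl
  · calc |Real.sin (k * s)| ≤ |k * s| := Real.abs_sin_le_abs
      _ = k * s := abs_of_nonneg (by positivity)
      _ ≤ k * x := by nlinarith

lemma phi_norm_le {w : ℂ} (hw : 0 < w.re) {x : ℝ} {k s y : ℝ} (hk : 0 < k)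
    (hs : s ∈ Icc 0 x) (hy : y ∈ Icc 0 x) :
    ‖phi w k s y‖ ≤ Bnd w x k := by
  have hπ := Real.pi_pos
  have h1 : ‖phi w k s y‖ =
      (|Real.sin (k*s)| / k) * (|Real.sin (k*y)| / k) * ‖sq2 w k - (k:ℂ)‖ * (2 * k / Real.pi) := by
    unfold phi
    rw [norm_mul, norm_mul, norm_mul]
    rw [Complex.norm_real, Complex.norm_real, Complex.norm_real]
    rw [Real.norm_eq_abs, Real.norm_eq_abs, Real.norm_eq_abs]
    rw [abs_div, abs_of_nonneg hk.le, abs_of_nonneg (by positivity : (0:ℝ) ≤ 2 * k / Real.pi)]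
    rw [abs_div, abs_of_nonneg hk.le]
  rw [h1]
  have hmin : 0 ≤ min 1 (k * x) := le_min zero_le_one (by
    rcases hs with ⟨h0, hx'⟩; nlinarith)
  have hb1 : |Real.sin (k*s)| ≤ min 1 (k*x) := sin_bound hk hs
  have hb2 : |Real.sin (k*y)| ≤ min 1 (k*x) := sin_bound hk hy
  have hb3 : ‖sq2 w k - (k:ℂ)‖ ≤ ‖w‖ / k := m_norm_le hw hk
  have step : (|Real.sin (k*s)| / k) * (|Real.sin (k*y)| / k) * ‖sq2 w k - (k:ℂ)‖ *
      (2 * k / Real.pi) ≤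
      (min 1 (k*x) / k) * (min 1 (k*x) / k) * (‖w‖ / k) * (2 * k / Real.pi) := by
    gcongr <;> positivity
  refine step.trans (le_of_eq ?_)
  unfold Bnd
  field_simp

lemma Bnd_measurable (w : ℂ) (x : ℝ) : Measurable (Bnd w x) := by
  unfold Bnd
  fun_prop

lemma Bnd_integrableOn {w : ℂ} {x : ℝ} (hx : 0 < x) :
    IntegrableOn (Bnd w x) (Ioi (0:ℝ)) volume := by
  have hπ := Real.pi_pos
  have hmeas := Bnd_measurable w x
  have h1 : IntegrableOn (Bnd w x) (Ioc 0 (1/x)) volume := by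
    apply Measure.integrableOn_of_bounded (M := 2 * ‖w‖ / Real.pi * x ^ 2) ?_
      hmeas.aestronglyMeasurable ?_
    · simp [Real.volume_Ioc]
    · filter_upwards [ae_restrict_mem measurableSet_Ioc] with k hk
      rcases hk with ⟨hk0, _⟩
      rw [Real.norm_eq_abs, abs_of_nonneg (Bnd_nonneg w x k)]
      unfold Bnd
      have hle : (min 1 (k*x))^2 / k^2 ≤ x^2 := by
        have h1 : min 1 (k*x) ≤ k*x := min_le_right _ _
        have h2 : 0 ≤ min 1 (k*x) := le_min zero_le_one (by positivity)
        rw [div_le_iff₀ (by positivity)]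
        nlinarith
      have hc : (0:ℝ) ≤ 2 * ‖w‖ / Real.pi := by positivity
      exact mul_le_mul_of_nonneg_left hle hc
  have h2 : IntegrableOn (Bnd w x) (Ioi (1/x)) volume := by
    have hig : IntegrableOn (fun k : ℝ => 2 * ‖w‖ / Real.pi * k ^ (-2 : ℝ)) (Ioi (1/x)) volume :=
      (integrableOn_Ioi_rpow_of_lt (by norm_num) (by positivity)).const_mul _
    apply Integrable.mono' hig hmeas.aestronglyMeasurable
    filter_upwards [ae_restrict_mem measurableSet_Ioi] with k hk
    have hk0 : 0 < k := lt_trans (by positivity) hk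
    rw [Real.norm_eq_abs, abs_of_nonneg (Bnd_nonneg w x k)]
    unfold Bnd
    have hrw : k ^ (-2:ℝ) = 1 / k ^ 2 := by
      rw [Real.rpow_neg hk0.le, ← Real.rpow_natCast k 2]
      norm_num
    rw [hrw]
    have hsq : (min 1 (k*x))^2 ≤ 1 := by
      have ha := min_le_left 1 (k*x)
      have hb : 0 ≤ min 1 (k*x) := le_min zero_le_one (by positivity)
      nlinarith
    have hle : (min 1 (k*x))^2 / k^2 ≤ 1 / k^2 := by gcongr
    exact mul_le_mul_of_nonneg_left hle (by positivity)
  have := h1.union h2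
  rwa [Ioc_union_Ioi_eq_Ioi (by positivity : (0:ℝ) ≤ 1/x)] at this


lemma sq2_continuous {w : ℂ} (hw : 0 < w.re) : Continuous (sq2 w) := by
  rw [continuous_iff_continuousAt]
  intro k
  have h1 : ContinuousAt (fun k : ℝ => ((k:ℂ)^2 + w)) k := by fun_prop
  have hmem : ((k:ℂ)^2 + w) ∈ Complex.slitPlane := by
    rw [Complex.mem_slitPlane_iff]
    left
    have : ((k:ℂ)^2).re = k^2 := by norm_cast
    simp only [Complex.add_re, this]
    nlinarith
  exact ContinuousAt.comp (g := fun z : ℂ => z ^ ((1:ℂ)/2)) (continuousAt_cpow_const hmem) h1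

lemma phi_meas3 {w : ℂ} (hw : 0 < w.re) :
    Measurable fun r : (ℝ × ℝ) × ℝ => phi w r.2 r.1.2 r.1.1 := by
  unfold phi
  have hsq2 : Measurable (sq2 w) := (sq2_continuous hw).measurable
  fun_prop

lemma phi_meas2 {w : ℂ} (hw : 0 < w.re) (y : ℝ) :
    Measurable fun q : ℝ × ℝ => phi w q.2 q.1 y := by
  unfold phi
  have hsq2 : Measurable (sq2 w) := (sq2_continuous hw).measurable
  fun_prop

end Stmt15Aux

set_option maxHeartbeats 1000000 in
open Stmt15Aux in
/-- **Lower `L²` bound for the perturbed identity operator.** For `x > 0`, `Re w > 0` and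
`h ∈ L²([0,x];ℂ)`: `‖h‖_{L²([0,x])} ≤ ‖y ↦ h(y) + ∫₀^x h(s)Φ(s,y,w) ds‖_{L²([0,x])}`. -/
theorem stmt_15 (x : ℝ) (hx : 0 < x) (w : ℂ) (hw : 0 < w.re)
    (h : ℝ → ℂ) (hh : MemLp h 2 (volume.restrict (Icc (0:ℝ) x))) :
    eLpNorm h 2 (volume.restrict (Icc (0:ℝ) x)) ≤
      eLpNorm (fun y => h y + ∫ s in (0:ℝ)..x, h s * Phi s y w) 2
        (volume.restrict (Icc (0:ℝ) x)) := by
  have hπ := Real.pi_pos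
  set μ : Measure ℝ := volume.restrict (Icc (0:ℝ) x) with hμdef
  set ν : Measure ℝ := volume.restrict (Ioi (0:ℝ)) with hνdef
  haveI : IsFiniteMeasure μ := by
    constructor
    rw [hμdef, Measure.restrict_apply_univ, Real.volume_Icc]
    exact ENNReal.ofReal_lt_top
  have hInt_h : Integrable h μ := hh.integrable (by norm_num)
  set L : ℝ := ∫ s, ‖h s‖ ∂μ with hLdef
  have hL0 : 0 ≤ L := integral_nonneg fun s => norm_nonneg _
  -- the sine transform of h
  set S : ℝ → ℂ := fun k => ∫ s, h s * ((Real.sin (k * s) : ℝ) : ℂ) ∂μ with hSdef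
  have hS_meas : AEStronglyMeasurable S ν := by
    apply AEStronglyMeasurable.integral_prod_right'
      (f := fun q : ℝ × ℝ => h q.2 * ((Real.sin (q.1 * q.2) : ℝ) : ℂ))
    apply AEStronglyMeasurable.mul
    · exact hInt_h.aestronglyMeasurable.comp_snd
    · apply Continuous.aestronglyMeasurable
      fun_prop
  have hS_bound : ∀ k ∈ Ioi (0:ℝ), ‖S k‖ ≤ L * min 1 (k * x) := by
    intro k hk
    have hk0 : (0:ℝ) < k := hk
    have hmin0 : 0 ≤ min 1 (k * x) := le_min zero_le_one (by positivity)
    have : ‖S k‖ ≤ ∫ s, ‖h s‖ * min 1 (k * x) ∂μ := by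
      apply norm_integral_le_of_norm_le (hInt_h.norm.mul_const _)
      filter_upwards [ae_restrict_mem measurableSet_Icc] with s hs
      rw [norm_mul, Complex.norm_real, Real.norm_eq_abs]
      exact mul_le_mul_of_nonneg_left (sin_bound hk hs) (norm_nonneg _)
    rwa [integral_mul_const] at this
  -- the reduced kernel
  set T : ℝ → ℝ → ℂ := fun k y =>
    S k * (((Real.sin (k * y) : ℝ) : ℂ) * (sq2 w k - (k:ℂ)) *
      ((2 / (Real.pi * k) : ℝ) : ℂ)) with hTdef
  have hT_norm : ∀ k ∈ Ioi (0:ℝ), ∀ y ∈ Icc (0:ℝ) x, ‖T k y‖ ≤ L * Bnd w x k := by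
    intro k hk y hy
    have hk0 : (0:ℝ) < k := hk
    have hmin0 : 0 ≤ min 1 (k * x) := le_min zero_le_one (by positivity)
    have e1 : ‖T k y‖ = ‖S k‖ * (|Real.sin (k*y)| * ‖sq2 w k - (k:ℂ)‖ * (2 / (Real.pi * k))) := by
      rw [hTdef]
      simp only [norm_mul, Complex.norm_real, Real.norm_eq_abs]
      rw [abs_of_nonneg (by positivity : (0:ℝ) ≤ 2 / (Real.pi * k))]
    rw [e1]
    have step : ‖S k‖ * (|Real.sin (k*y)| * ‖sq2 w k - (k:ℂ)‖ * (2 / (Real.pi * k))) ≤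
        (L * min 1 (k*x)) * ((min 1 (k*x)) * (‖w‖ / k) * (2 / (Real.pi * k))) := by
      gcongr
      · exact hS_bound k hk
      · exact sin_bound hk0 hy
      · exact m_norm_le hw hk0
    refine step.trans (le_of_eq ?_)
    unfold Bnd
    field_simp
  -- reduction of the inner integral
  have hInner1 : ∀ k ∈ Ioi (0:ℝ), ∀ y : ℝ,
      (∫ s, h s * phi w k s y ∂μ) = T k y := by
    intro k hk y
    have hk0 : (0:ℝ) < k := hk
    have hkC : ((k:ℝ):ℂ) ≠ 0 := Complex.ofReal_ne_zero.mpr (ne_of_gt hk0)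
    have hπC : ((Real.pi:ℝ):ℂ) ≠ 0 := Complex.ofReal_ne_zero.mpr (ne_of_gt hπ)
    have hptw : ∀ s, h s * phi w k s y =
        (h s * ((Real.sin (k * s) : ℝ) : ℂ)) *
          (((Real.sin (k * y) : ℝ) : ℂ) * (sq2 w k - (k:ℂ)) * ((2 / (Real.pi * k) : ℝ) : ℂ)) := by
      intro s
      unfold phi
      push_cast
      field_simp
    simp_rw [hptw]
    rw [integral_mul_const]
  -- Fubini, first application: representation of G
  set G : ℝ → ℂ := fun y => ∫ s, h s * Phi s y w ∂μ with hGdef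
  have hF1int : ∀ y ∈ Icc (0:ℝ) x,
      Integrable (fun q : ℝ × ℝ => h q.1 * phi w q.2 q.1 y) (μ.prod ν) := by
    intro y hy
    apply Integrable.mono' ((hInt_h.norm).mul_prod (Bnd_integrableOn hx))
    · exact hInt_h.aestronglyMeasurable.comp_fst.mul (phi_meas2 hw y).aestronglyMeasurable
    · have hps : μ.prod ν = (volume.prod volume).restrict ((Icc (0:ℝ) x) ×ˢ (Ioi (0:ℝ))) :=
        Measure.prod_restrict _ _
      rw [hps]
      filter_upwards [ae_restrict_mem (measurableSet_Icc.prod measurableSet_Ioi)] with q hq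
      rcases hq with ⟨hq1, hq2⟩
      rw [norm_mul]
      exact mul_le_mul_of_nonneg_left (phi_norm_le hw hq2 hq1 hy) (norm_nonneg _)
  have hGrep : ∀ y ∈ Icc (0:ℝ) x, G y = ∫ k, T k y ∂ν := by
    intro y hy
    have e1 : G y = ∫ s, ∫ k, h s * phi w k s y ∂ν ∂μ := by
      rw [hGdef]
      refine integral_congr_ae (ae_of_all _ fun s => ?_)
      show h s * Phi s y w = ∫ k, h s * phi w k s y ∂ν
      rw [Phi_eq, ← integral_const_mul]
    rw [e1, integral_integral_swap (f := fun s k => h s * phi w k s y) (hF1int y hy)]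
    refine integral_congr_ae ?_
    filter_upwards [ae_restrict_mem measurableSet_Ioi] with k hk
    exact hInner1 k hk y
  -- uniform bound on Phi and on G
  set IB : ℝ := ∫ k, Bnd w x k ∂ν with hIBdef
  have hIB0 : 0 ≤ IB := integral_nonneg fun k => Bnd_nonneg w x k
  have hPhi_bound : ∀ s ∈ Icc (0:ℝ) x, ∀ y ∈ Icc (0:ℝ) x, ‖Phi s y w‖ ≤ IB := by
    intro s hs y hy
    rw [Phi_eq]
    apply norm_integral_le_of_norm_le (Bnd_integrableOn hx)
    filter_upwards [ae_restrict_mem measurableSet_Ioi] with k hk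
    exact phi_norm_le hw hk hs hy
  have hG_norm : ∀ y ∈ Icc (0:ℝ) x, ‖G y‖ ≤ L * IB := by
    intro y hy
    have : ‖G y‖ ≤ ∫ s, ‖h s‖ * IB ∂μ := by
      apply norm_integral_le_of_norm_le (hInt_h.norm.mul_const _)
      filter_upwards [ae_restrict_mem measurableSet_Icc] with s hs
      rw [norm_mul]
      exact mul_le_mul_of_nonneg_left (hPhi_bound s hs y hy) (norm_nonneg _)
    rwa [integral_mul_const] at this
  have hPhiSM : StronglyMeasurable fun p : ℝ × ℝ => Phi p.2 p.1 w := by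
    have : StronglyMeasurable fun r : (ℝ × ℝ) × ℝ => phi w r.2 r.1.2 r.1.1 :=
      (phi_meas3 hw).stronglyMeasurable
    exact this.integral_prod_right'
  have hG_meas : AEStronglyMeasurable G μ := by
    apply AEStronglyMeasurable.integral_prod_right'
      (f := fun p : ℝ × ℝ => h p.2 * Phi p.2 p.1 w)
    exact hInt_h.aestronglyMeasurable.comp_snd.mul hPhiSM.aestronglyMeasurable
  have hG_mem : MemLp G 2 μ := by
    apply MemLp.of_bound hG_meas (L * IB)
    filter_upwards [ae_restrict_mem measurableSet_Icc] with y hy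
    exact hG_norm y hy
  -- Fubini, second application: the quadratic form
  have hF2int : Integrable
      (fun q : ℝ × ℝ => (starRingEnd ℂ) (h q.1) * T q.2 q.1) (μ.prod ν) := by
    apply Integrable.mono' ((hInt_h.norm).mul_prod ((Bnd_integrableOn hx).const_mul L))
    · apply AEStronglyMeasurable.mul
      · exact (RCLike.continuous_conj.comp_aestronglyMeasurable
          hInt_h.aestronglyMeasurable).comp_fst
      · rw [hTdef]
        apply AEStronglyMeasurable.mul
        · exact hS_meas.comp_snd
        · apply AEStronglyMeasurable.mul
          · apply AEStronglyMeasurable.mul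
            · apply Continuous.aestronglyMeasurable; fun_prop
            · exact (((sq2_continuous hw).measurable.comp measurable_snd).sub
                (Complex.measurable_ofReal.comp measurable_snd)).aestronglyMeasurable
          · apply Measurable.aestronglyMeasurable
            fun_prop
    · have hps : μ.prod ν = (volume.prod volume).restrict ((Icc (0:ℝ) x) ×ˢ (Ioi (0:ℝ))) :=
        Measure.prod_restrict _ _
      rw [hps]
      filter_upwards [ae_restrict_mem (measurableSet_Icc.prod measurableSet_Ioi)] with q hq
      rcases hq with ⟨hq1, hq2⟩
      rw [norm_mul, RCLike.norm_conj]
      calc ‖h q.1‖ * ‖T q.2 q.1‖ ≤ ‖h q.1‖ * (L * Bnd w x q.2) :=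
            mul_le_mul_of_nonneg_left (hT_norm q.2 hq2 q.1 hq1) (norm_nonneg _)
        _ = ‖h q.1‖ * (L * Bnd w x q.2) := rfl
  set Q : ℂ := ∫ y, (starRingEnd ℂ) (h y) * G y ∂μ with hQdef
  have hQ1 : Q = ∫ y, ∫ k, (starRingEnd ℂ) (h y) * T k y ∂ν ∂μ := by
    rw [hQdef]
    refine integral_congr_ae ?_
    filter_upwards [ae_restrict_mem measurableSet_Icc] with y hy
    rw [hGrep y hy, ← integral_const_mul]
  have hQ2 : Q = ∫ k, ∫ y, (starRingEnd ℂ) (h y) * T k y ∂μ ∂ν := by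
    rw [hQ1]
    exact integral_integral_swap
      (f := fun y k => (starRingEnd ℂ) (h y) * T k y) hF2int
  have hInner2 : ∀ k ∈ Ioi (0:ℝ),
      (∫ y, (starRingEnd ℂ) (h y) * T k y ∂μ) =
        ((‖S k‖^2 : ℝ) : ℂ) * ((sq2 w k - (k:ℂ)) * ((2 / (Real.pi * k) : ℝ) : ℂ)) := by
    intro k hk
    have hptw : ∀ y, (starRingEnd ℂ) (h y) * T k y =
        ((starRingEnd ℂ) (h y * ((Real.sin (k*y) : ℝ) : ℂ))) *
          (S k * ((sq2 w k - (k:ℂ)) * ((2 / (Real.pi * k) : ℝ) : ℂ))) := by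
      intro y
      rw [hTdef]
      simp only [map_mul, Complex.conj_ofReal]
      ring
    simp_rw [hptw]
    rw [integral_mul_const, integral_conj]
    have : (starRingEnd ℂ) (∫ y, h y * ((Real.sin (k*y) : ℝ) : ℂ) ∂μ) = (starRingEnd ℂ) (S k) :=
      rfl
    rw [this, ← mul_assoc, RCLike.conj_mul]
    norm_cast
  have hQre : 0 ≤ Q.re := by
    have hgint : Integrable (fun k => ∫ y, (starRingEnd ℂ) (h y) * T k y ∂μ) ν :=
      hF2int.integral_prod_right
    have e1 : Q.re = ∫ k, (∫ y, (starRingEnd ℂ) (h y) * T k y ∂μ).re ∂ν := by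
      rw [hQ2]
      exact (integral_re hgint).symm
    rw [e1]
    apply integral_nonneg_of_ae
    filter_upwards [ae_restrict_mem measurableSet_Ioi] with k hk
    rw [hInner2 k hk]
    have hk0 : (0:ℝ) < k := hk
    have hre : ∀ (r c : ℝ) (z : ℂ), ((r:ℂ) * (z * (c:ℂ))).re = r * (z.re * c) := by
      intro r c z
      rw [Complex.re_ofReal_mul, Complex.mul_re]
      simp
    rw [hre]
    have h1 : 0 ≤ (sq2 w k - (k:ℂ)).re := m_re_nonneg hw hk0.le
    have h2 : (0:ℝ) ≤ 2 / (Real.pi * k) := by positivity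
    positivity
  -- rewrite the target function
  have hfun : (fun y => h y + ∫ s in (0:ℝ)..x, h s * Phi s y w) = fun y => h y + G y := by
    funext y
    have e : (∫ s in Icc (0:ℝ) x, h s * Phi s y w) = ∫ s in Ioc (0:ℝ) x, h s * Phi s y w :=
      integral_Icc_eq_integral_Ioc
    congr 1
    rw [intervalIntegral.integral_of_le hx.le, ← e]
  rw [hfun]
  -- pass to Lp
  set H : Lp ℂ 2 μ := hh.toLp h with hHdef
  set Gp : Lp ℂ 2 μ := hG_mem.toLp G with hGpdef
  have hsum_mem : MemLp (fun y => h y + G y) 2 μ := hh.add hG_mem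
  have hsum_toLp : hsum_mem.toLp (fun y => h y + G y) = H + Gp := by
    rw [hHdef, hGpdef]
    exact MemLp.toLp_add hh hG_mem
  have hinner : (inner ℂ H Gp : ℂ) = Q := by
    rw [MeasureTheory.L2.inner_def]
    rw [hQdef]
    refine integral_congr_ae ?_
    filter_upwards [hh.coeFn_toLp, hG_mem.coeFn_toLp] with y hy1 hy2
    rw [RCLike.inner_apply, hHdef, hGpdef, hy1, hy2]
    ring
  have hnorm : ‖H‖ ≤ ‖H + Gp‖ := by
    have hsq : ‖H‖^2 ≤ ‖H + Gp‖^2 := by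
      rw [norm_add_sq (𝕜 := ℂ)]
      have : 0 ≤ RCLike.re (inner ℂ H Gp : ℂ) := by
        rw [hinner, RCLike.re_to_complex]
        exact hQre
      nlinarith [norm_nonneg Gp, sq_nonneg ‖Gp‖]
    exact (pow_le_pow_iff_left₀ (norm_nonneg _) (norm_nonneg _) two_ne_zero).mp hsq
  have e1 : ‖H‖ = (eLpNorm h 2 μ).toReal := Lp.norm_toLp h hh
  have e2 : ‖H + Gp‖ = (eLpNorm (fun y => h y + G y) 2 μ).toReal := by
    rw [← hsum_toLp]
    exact Lp.norm_toLp _ _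
  rw [e1, e2] at hnorm
  exact (ENNReal.toReal_le_toReal hh.eLpNorm_ne_top hsum_mem.eLpNorm_ne_top).mp hnorm

end
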